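/- Let d ≥ 2 and let φ be C^d on (a,b) with φ', …, φ^{(d)} nonnegative and nondecreasing, and suppose 0 < α ≤ 2/(d(d+1)). Suppose that for the curve γ(t) = (t, t²/2, …, t^{d−1}/(d−1)!, φ(t)) and its arclength-parameter measure λ_γ we have λ_γ(E) ≤ B m_d(E)^α for all parallelepipeds E ⊂ ℝ^d. Then for all a < t < s < b, φ^{(d−1)}(s) − φ^{(d−1)}(t) ≥ B^{−1/α} (s − t)^{1/α + 1 − d(d+1)/2}. -/

import Mathlib

open MeasureTheory Set Finset

/-- On a set `s` with unique differentiability contained in an open set `O` on which `f` is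
`C^N`, the iterated derivative within `s` coincides with the global iterated derivative. -/
lemma my_iteratedDerivWithin_eq_iteratedDeriv {f : ℝ → ℝ} {O s : Set ℝ}
    (hO : IsOpen O) (hsub : s ⊆ O) (hs : UniqueDiffOn ℝ s) {N : ℕ}
    (hf : ContDiffOn ℝ N f O) {n : ℕ} (hn : n ≤ N) {x : ℝ} (hx : x ∈ s) :
    iteratedDerivWithin n f s x = iteratedDeriv n f x := by
  have h1 : HasFTaylorSeriesUpToOn N f (ftaylorSeriesWithin ℝ f O) O :=
    hf.ftaylorSeriesWithin hO.uniqueDiffOn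
  have h2 := (h1.mono hsub).eq_iteratedFDerivWithin_of_uniqueDiffOn (m := n)
    (by exact_mod_cast hn) hs hx
  have h3 : iteratedFDerivWithin ℝ n f O x = iteratedFDeriv ℝ n f x :=
    iteratedFDerivWithin_of_isOpen n hO (hsub hx)
  rw [iteratedDerivWithin_eq_iteratedFDerivWithin, iteratedDeriv_eq_iteratedFDeriv, ← h2]
  show (iteratedFDerivWithin ℝ n f O x) (fun _ => 1) = _
  rw [h3]

lemma my_taylor_bounds (m : ℕ) {a b : ℝ} {φ : ℝ → ℝ}
    (hφ : ContDiffOn ℝ (m + 2) φ (Set.Ioo a b))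
    (hmono : MonotoneOn (iteratedDeriv (m + 1) φ) (Set.Ioo a b))
    {t τ s : ℝ} (hat : a < t) (htτ : t < τ) (hτs : τ < s) (hsb : s < b) :
    0 ≤ φ τ - ∑ k ∈ range (m + 2), (τ - t) ^ k / (Nat.factorial k) * iteratedDeriv k φ t ∧
    φ τ - ∑ k ∈ range (m + 2), (τ - t) ^ k / (Nat.factorial k) * iteratedDeriv k φ t ≤
      (τ - t) ^ (m + 1) / (Nat.factorial (m + 1)) *
        (iteratedDeriv (m + 1) φ s - iteratedDeriv (m + 1) φ t) := by
  have hsb' : τ < b := hτs.trans hsb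
  have hIcc : Icc t τ ⊆ Ioo a b := fun x hx => ⟨lt_of_lt_of_le hat hx.1, lt_of_le_of_lt hx.2 hsb'⟩
  have hO : IsOpen (Ioo a b) := isOpen_Ioo
  have huniq := uniqueDiffOn_Icc htτ
  have hfd : ContDiffOn ℝ m φ (Icc t τ) :=
    (hφ.of_le (by exact_mod_cast Nat.le_add_right m 2)).mono hIcc
  have hdiff : DifferentiableOn ℝ (iteratedDerivWithin m φ (Icc t τ)) (Ioo t τ) :=
    ((hφ.mono hIcc).differentiableOn_iteratedDerivWithin
      (by exact_mod_cast Nat.lt_add_of_pos_right (by norm_num)) huniq).mono Ioo_subset_Icc_self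
  obtain ⟨ξ, hξ, hξeq⟩ := taylor_mean_remainder_lagrange htτ.ne (by rwa [uIcc_of_le htτ.le])
    (by rwa [uIcc_of_le htτ.le, uIoo_of_lt htτ])
  rw [uIcc_of_le htτ.le] at hξeq
  rw [uIoo_of_lt htτ] at hξ
  rw [taylor_within_apply] at hξeq
  have hφ' : ContDiffOn ℝ ((m + 2 : ℕ)) φ (Set.Ioo a b) := by exact_mod_cast hφ
  have hξIcc : ξ ∈ Icc t τ := ⟨hξ.1.le, hξ.2.le⟩
  have hξab : ξ ∈ Ioo a b := hIcc hξIcc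
  have htab : t ∈ Ioo a b := ⟨hat, htτ.trans hsb'⟩
  have hsab : s ∈ Ioo a b := ⟨hat.trans (htτ.trans hτs), hsb⟩
  rw [my_iteratedDerivWithin_eq_iteratedDeriv hO hIcc huniq hφ'
      (by omega : m + 1 ≤ m + 2) hξIcc] at hξeq
  have hsum : ∀ k ∈ range (m + 1), (((Nat.factorial k : ℝ))⁻¹ * (τ - t) ^ k) •
      iteratedDerivWithin k φ (Icc t τ) t =
      (τ - t) ^ k / (Nat.factorial k) * iteratedDeriv k φ t := by
    intro k hk
    rw [my_iteratedDerivWithin_eq_iteratedDeriv hO hIcc huniq hφ'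
      (by simp at hk; omega) (left_mem_Icc.2 htτ.le), smul_eq_mul]
    ring
  rw [Finset.sum_congr rfl hsum] at hξeq
  have hkey : φ τ - ∑ k ∈ range (m + 2), (τ - t) ^ k / (Nat.factorial k) * iteratedDeriv k φ t
      = (iteratedDeriv (m + 1) φ ξ - iteratedDeriv (m + 1) φ t) * (τ - t) ^ (m + 1)
        / (Nat.factorial (m + 1)) := by
    rw [Finset.sum_range_succ]
    rw [sub_add_eq_sub_sub, hξeq]
    ring
  have hwpos : (0:ℝ) < τ - t := sub_pos.2 htτ
  have hw : (0:ℝ) ≤ (τ - t) ^ (m + 1) / (Nat.factorial (m + 1)) :=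
    div_nonneg (pow_nonneg hwpos.le _) (Nat.cast_nonneg _)
  have hm1 : iteratedDeriv (m + 1) φ t ≤ iteratedDeriv (m + 1) φ ξ := hmono htab hξab hξ.1.le
  have hm2 : iteratedDeriv (m + 1) φ ξ ≤ iteratedDeriv (m + 1) φ s :=
    hmono hξab hsab (hξ.2.trans hτs).le
  constructor
  · rw [hkey]
    have h0 : 0 ≤ iteratedDeriv (m + 1) φ ξ - iteratedDeriv (m + 1) φ t := by linarith
    exact div_nonneg (mul_nonneg h0 (pow_nonneg hwpos.le _)) (Nat.cast_nonneg _)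
  · rw [hkey]
    rw [div_eq_mul_inv, div_eq_mul_inv]
    have hpow : (0:ℝ) ≤ (τ - t) ^ (m+1) := pow_nonneg hwpos.le _
    have hfac : (0:ℝ) ≤ ((Nat.factorial (m+1) : ℝ))⁻¹ := by positivity

    nlinarith [mul_le_mul_of_nonneg_right (mul_le_mul_of_nonneg_right
      (sub_le_sub_right hm2 (iteratedDeriv (m + 1) φ t)) hpow) hfac]

lemma my_binom_div (n : ℕ) (t w : ℝ) :
    (t + w) ^ (n + 1) / (Nat.factorial (n + 1)) = t ^ (n + 1) / (Nat.factorial (n + 1)) +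
      ∑ j ∈ range (n + 1), w ^ (j + 1) *
        (t ^ (n - j) / (Nat.factorial (j + 1) * Nat.factorial (n - j))) := by
  have hb : (t + w) ^ (n + 1) = t ^ (n + 1) +
      ∑ j ∈ range (n + 1), w ^ (j + 1) * t ^ (n - j) * ((n + 1).choose (j + 1)) := by
    rw [add_comm t w, add_pow, Finset.sum_range_succ']
    simp [Nat.succ_sub_succ]
    ring
  rw [hb, add_div, Finset.sum_div]
  congr 1
  apply Finset.sum_congr rfl
  intro j hj
  have hjn : j + 1 ≤ n + 1 := by simp at hj; omega
  have hfac : ((n + 1).choose (j + 1) : ℝ) * (Nat.factorial (j + 1)) * (Nat.factorial (n - j))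
      = Nat.factorial (n + 1) := by
    have := Nat.choose_mul_factorial_mul_factorial hjn
    rw [Nat.succ_sub_succ] at this
    exact_mod_cast congrArg (Nat.cast : ℕ → ℝ) this
  have h1 : (Nat.factorial (n + 1) : ℝ) ≠ 0 := Nat.cast_ne_zero.2 (Nat.factorial_ne_zero _)
  have h2 : (Nat.factorial (j + 1) : ℝ) ≠ 0 := Nat.cast_ne_zero.2 (Nat.factorial_ne_zero _)
  have h3 : (Nat.factorial (n - j) : ℝ) ≠ 0 := Nat.cast_ne_zero.2 (Nat.factorial_ne_zero _)
  field_simp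
  linear_combination (w ^ (j + 1) * t ^ (n - j)) * hfac

lemma my_volume (n : ℕ) (x₀ : Fin n → ℝ) (V : Fin n → Fin n → ℝ) :
    volume {x : Fin n → ℝ | ∃ u : Fin n → ℝ, (∀ j, u j ∈ Set.Icc (0:ℝ) 1) ∧
      x = x₀ + ∑ j, u j • V j} = ENNReal.ofReal |(Matrix.of V).det| := by
  set A : Matrix (Fin n) (Fin n) ℝ := Matrix.transpose (Matrix.of V) with hA
  have hE : {x : Fin n → ℝ | ∃ u : Fin n → ℝ, (∀ j, u j ∈ Set.Icc (0:ℝ) 1) ∧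
      x = x₀ + ∑ j, u j • V j}
      = (fun y => x₀ +ᵥ y) '' (Matrix.toLin' A '' (Set.Icc 0 1)) := by
    ext x
    simp only [Set.mem_setOf_eq, Set.mem_image, exists_exists_and_eq_and]
    constructor
    · rintro ⟨u, hu, rfl⟩
      refine ⟨u, ?_, ?_⟩
      · rw [Set.mem_Icc]
        constructor <;> intro j
        · exact (hu j).1
        · exact (hu j).2
      · show x₀ + _ = x₀ + _
        congr 1
        funext i
        rw [Matrix.toLin'_apply]
        simp only [Matrix.mulVec, dotProduct, Finset.sum_apply, Pi.smul_apply,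
          smul_eq_mul, hA, Matrix.transpose_apply, Matrix.of_apply]
        exact Finset.sum_congr rfl fun j _ => mul_comm _ _
    · rintro ⟨u, hu, rfl⟩
      rw [Set.mem_Icc] at hu
      refine ⟨u, fun j => ⟨hu.1 j, hu.2 j⟩, ?_⟩
      show _ = x₀ + _
      congr 1
      funext i
      rw [Matrix.toLin'_apply]
      simp only [Matrix.mulVec, dotProduct, Finset.sum_apply, Pi.smul_apply,
        smul_eq_mul, hA, Matrix.transpose_apply, Matrix.of_apply]
      exact Finset.sum_congr rfl fun j _ => mul_comm _ _
  rw [hE, Set.image_vadd, measure_vadd, Measure.addHaar_image_linearMap,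
    LinearMap.det_toLin', hA, Matrix.det_transpose]
  have h01 : volume (Set.Icc (0 : Fin n → ℝ) 1) = 1 := by
    rw [Real.volume_Icc_pi]
    simp
  rw [h01, mul_one]

/-- The frame of the parallelepiped adapted to the moment-type curve. -/
noncomputable def myV (m : ℕ) (h t ε Δ : ℝ) (φ : ℝ → ℝ) (j i : ℕ) : ℝ :=
  if j + 1 < m + 2 then
    (if i + 1 < m + 2 then
       (if j ≤ i then h ^ (j + 1) / (Nat.factorial (j + 1)) *
          (t ^ (i - j) / (Nat.factorial (i - j))) else 0)
     else h ^ (j + 1) / (Nat.factorial (j + 1)) * iteratedDeriv (j + 1) φ t)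
  else (if i + 1 < m + 2 then 0
        else h ^ (m + 1) / (Nat.factorial (m + 1)) * (Δ + ε))

lemma myV_diag (m : ℕ) (h t ε Δ : ℝ) (φ : ℝ → ℝ) (i : ℕ) :
    myV m h t ε Δ φ i i = if i + 1 < m + 2 then h ^ (i + 1) / (Nat.factorial (i + 1))
      else h ^ (m + 1) / (Nat.factorial (m + 1)) * (Δ + ε) := by
  unfold myV
  by_cases hi : i + 1 < m + 2
  · rw [if_pos hi, if_pos hi, if_pos hi, if_pos (le_refl i), Nat.sub_self]
    norm_num
  · rw [if_neg hi, if_neg hi, if_neg hi]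

lemma myV_tri (m : ℕ) (h t ε Δ : ℝ) (φ : ℝ → ℝ) (j i : ℕ) (hij : i < j) (hjm : j < m + 2) :
    myV m h t ε Δ φ j i = 0 := by
  unfold myV
  have hi' : i + 1 < m + 2 := by omega
  by_cases hj : j + 1 < m + 2
  · rw [if_pos hj, if_pos hi', if_neg (by omega)]
  · rw [if_neg hj, if_pos hi']

lemma my_contain (m : ℕ) {a b t s τ ε : ℝ} {φ : ℝ → ℝ}
    (hφ : ContDiffOn ℝ ((m + 2 : ℕ)) φ (Set.Ioo a b))
    (hmono : MonotoneOn (iteratedDeriv (m + 1) φ) (Set.Ioo a b))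
    (hat : a < t) (htτ : t < τ) (hτs : τ < s) (hsb : s < b) (hε : 0 < ε) :
    ∃ u : Fin (m + 2) → ℝ, (∀ j, u j ∈ Set.Icc (0:ℝ) 1) ∧
      (fun i : Fin (m + 2) => if (i : ℕ) + 1 < m + 2
          then τ ^ ((i : ℕ) + 1) / (Nat.factorial ((i : ℕ) + 1)) else φ τ)
        = (fun i : Fin (m + 2) => if (i : ℕ) + 1 < m + 2
            then t ^ ((i : ℕ) + 1) / (Nat.factorial ((i : ℕ) + 1)) else φ t)
          + ∑ j, u j • (fun i : Fin (m + 2) => myV m (s - t) t ε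
                (iteratedDeriv (m + 1) φ s - iteratedDeriv (m + 1) φ t) φ (j : ℕ) (i : ℕ)) := by
  have hh : (0:ℝ) < s - t := sub_pos.2 (htτ.trans hτs)
  have hw : (0:ℝ) < τ - t := sub_pos.2 htτ
  have hwh : τ - t < s - t := by linarith
  have htab : t ∈ Set.Ioo a b := ⟨hat, by linarith [hτs.trans hsb]⟩
  have hsab : s ∈ Set.Ioo a b := ⟨by linarith, hsb⟩
  set w := τ - t with hwdef
  set h := s - t with hhdef
  set Δ := iteratedDeriv (m + 1) φ s - iteratedDeriv (m + 1) φ t with hΔdef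
  have hΔ0 : 0 ≤ Δ := sub_nonneg.2 (hmono htab hsab (htτ.trans hτs).le)
  have hΔε : 0 < Δ + ε := by linarith
  set D := h ^ (m + 1) / (Nat.factorial (m + 1)) * (Δ + ε) with hDdef
  have hfacpos : (0:ℝ) < Nat.factorial (m + 1) := by positivity
  have hD : 0 < D := mul_pos (div_pos (pow_pos hh _) hfacpos) hΔε
  set R := φ τ - ∑ k ∈ range (m + 2),
      w ^ k / (Nat.factorial k) * iteratedDeriv k φ t with hRdef
  obtain ⟨hR0, hR1⟩ := my_taylor_bounds m hφ hmono hat htτ hτs hsb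
  have hRD : R ≤ D := by
    refine hR1.trans ?_
    rw [hDdef]
    have h1 : w ^ (m + 1) ≤ h ^ (m + 1) := pow_le_pow_left₀ hw.le hwh.le _
    have h2 : w ^ (m + 1) / (Nat.factorial (m + 1)) ≤ h ^ (m + 1) / (Nat.factorial (m + 1)) :=
      div_le_div_of_nonneg_right h1 hfacpos.le
    have h3 : (0:ℝ) ≤ w ^ (m + 1) / (Nat.factorial (m + 1)) :=
      div_nonneg (pow_nonneg hw.le _) hfacpos.le
    nlinarith
  set un : ℕ → ℝ := fun j => if j + 1 < m + 2 then (w / h) ^ (j + 1) else R / D with hundef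
  refine ⟨fun j => un (j : ℕ), fun j => ?_, ?_⟩
  · by_cases hj : (j : ℕ) + 1 < m + 2
    · simp only [hundef, if_pos hj]
      have h0 : (0:ℝ) ≤ w / h := div_nonneg hw.le hh.le
      have h1 : w / h ≤ 1 := (div_le_one hh).2 hwh.le
      exact ⟨pow_nonneg h0 _, pow_le_one₀ h0 h1⟩
    · simp only [hundef, if_neg hj]
      exact ⟨div_nonneg hR0 hD.le, (div_le_one hD).2 hRD⟩
  · funext i
    simp only [Pi.add_apply, Finset.sum_apply, Pi.smul_apply, smul_eq_mul]
    have hrw : ∑ j : Fin (m + 2), un (j : ℕ) * myV m h t ε Δ φ (j : ℕ) (i : ℕ)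
        = ∑ j ∈ range (m + 2), un j * myV m h t ε Δ φ j (i : ℕ) :=
      Fin.sum_univ_eq_sum_range (fun j => un j * myV m h t ε Δ φ j (i : ℕ)) (m + 2)
    rw [hrw]
    by_cases hi : (i : ℕ) + 1 < m + 2
    · rw [if_pos hi, if_pos hi]
      set i0 := (i : ℕ) with hi0def
      have hi0 : i0 + 1 ≤ m + 1 := by omega
      have hstep : ∑ j ∈ range (m + 2), un j * myV m h t ε Δ φ j i0
          = ∑ j ∈ range (i0 + 1), w ^ (j + 1) *
            (t ^ (i0 - j) / (Nat.factorial (j + 1) * Nat.factorial (i0 - j))) := by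
        rw [← Finset.sum_subset (Finset.range_subset_range.2 (by omega : i0 + 1 ≤ m + 2))]
        · apply Finset.sum_congr rfl
          intro j hj
          rw [Finset.mem_range] at hj
          have hj1 : j + 1 < m + 2 := by omega
          simp only [hundef, myV, if_pos hj1, if_pos hi, if_pos (by omega : j ≤ i0)]
          rw [div_pow]
          have hhne : h ^ (j + 1) ≠ 0 := pow_ne_zero _ hh.ne'
          field_simp
        · intro j hjmem hjnot
          rw [Finset.mem_range] at hjmem
          rw [Finset.mem_range, not_lt] at hjnot
          by_cases hj1 : j + 1 < m + 2
          · simp only [hundef, myV, if_pos hj1, if_pos hi, if_neg (by omega : ¬ j ≤ i0)]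
            ring
          · simp only [hundef, myV, if_neg hj1, if_pos hi]
            ring
      rw [hstep]
      have hτeq : τ = t + w := by rw [hwdef]; ring
      rw [hτeq]
      exact my_binom_div i0 t w
    · rw [if_neg hi, if_neg hi]
      have hstep : ∑ j ∈ range (m + 2), un j * myV m h t ε Δ φ j (i : ℕ)
          = (∑ j ∈ range (m + 1),
              w ^ (j + 1) / (Nat.factorial (j + 1)) * iteratedDeriv (j + 1) φ t) + R := by
        rw [Finset.sum_range_succ]
        congr 1
        · apply Finset.sum_congr rfl
          intro j hj
          rw [Finset.mem_range] at hj
          have hj1 : j + 1 < m + 2 := by omega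
          simp only [hundef, myV, if_pos hj1, if_neg hi]
          rw [div_pow]
          have hhne : h ^ (j + 1) ≠ 0 := pow_ne_zero _ hh.ne'
          field_simp
        · simp only [hundef, myV, if_neg (by omega : ¬ (m + 1) + 1 < m + 2), if_neg hi]
          exact div_mul_cancel₀ R hD.ne'
      rw [hstep]
      have hshift : ∑ k ∈ range (m + 2), w ^ k / (Nat.factorial k) * iteratedDeriv k φ t
          = φ t + ∑ j ∈ range (m + 1),
              w ^ (j + 1) / (Nat.factorial (j + 1)) * iteratedDeriv (j + 1) φ t := by
        rw [Finset.sum_range_succ']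
        simp [iteratedDeriv_zero]
        ring
      have hR' : R = φ τ - ∑ k ∈ range (m + 2),
          w ^ k / (Nat.factorial k) * iteratedDeriv k φ t := rfl
      linarith

/-- if the curve `γ(t) = (t, t²/2, …, t^{d-1}/(d-1)!, φ(t))` with `φ'`,
…, `φ^{(d)}` nonnegative and nondecreasing satisfies `λ_γ(E) ≤ B m_d(E)^α` for all
parallelepipeds `E ⊂ ℝ^d`, where `0 < α ≤ 2/(d(d+1))`, then
`φ^{(d-1)}(s) - φ^{(d-1)}(t) ≥ B^{-1/α} (s-t)^{1/α + 1 - d(d+1)/2}` for `a < t < s < b`. -/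
theorem stmt17 (d : ℕ) (hd : 2 ≤ d) (a b : ℝ) (φ : ℝ → ℝ) (α B : ℝ)
    (hα0 : 0 < α) (hα1 : α ≤ 2 / ((d : ℝ) * (d + 1))) (hB : 0 < B)
    (hφ : ContDiffOn ℝ d φ (Set.Ioo a b))
    (hder : ∀ i : ℕ, 1 ≤ i → i ≤ d →
      (∀ x ∈ Set.Ioo a b, 0 ≤ iteratedDeriv i φ x) ∧
        MonotoneOn (iteratedDeriv i φ) (Set.Ioo a b))
    (hrestr : ∀ (x₀ : Fin d → ℝ) (v : Fin d → (Fin d → ℝ)), LinearIndependent ℝ v →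
      (volume {t ∈ Set.Ioo a b |
          (fun i : Fin d => if (i : ℕ) + 1 < d
              then t ^ ((i : ℕ) + 1) / (Nat.factorial ((i : ℕ) + 1)) else φ t)
            ∈ {x : Fin d → ℝ | ∃ u : Fin d → ℝ,
                (∀ j, u j ∈ Set.Icc (0 : ℝ) 1) ∧ x = x₀ + ∑ j, u j • v j}}).toReal
        ≤ B * (volume {x : Fin d → ℝ | ∃ u : Fin d → ℝ,
            (∀ j, u j ∈ Set.Icc (0 : ℝ) 1) ∧ x = x₀ + ∑ j, u j • v j}).toReal ^ α) :
    ∀ t s : ℝ, a < t → t < s → s < b →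
      iteratedDeriv (d - 1) φ s - iteratedDeriv (d - 1) φ t
        ≥ B ^ (-(1 / α)) * (s - t) ^ (1 / α + 1 - (d : ℝ) * (d + 1) / 2) := by
  intro t s hat hts hsb
  obtain ⟨m, rfl⟩ : ∃ m, d = m + 2 := ⟨d - 2, by omega⟩
  simp only [show m + 2 - 1 = m + 1 from rfl]
  have hh : (0:ℝ) < s - t := sub_pos.2 hts
  have htab : t ∈ Set.Ioo a b := ⟨hat, hts.trans hsb⟩
  have hsab : s ∈ Set.Ioo a b := ⟨hat.trans hts, hsb⟩
  set h := s - t with hhdef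
  set Δ := iteratedDeriv (m + 1) φ s - iteratedDeriv (m + 1) φ t with hΔdef
  have hmono : MonotoneOn (iteratedDeriv (m + 1) φ) (Set.Ioo a b) :=
    (hder (m + 1) (by omega) (by omega)).2
  have hΔ0 : 0 ≤ Δ := sub_nonneg.2 (hmono htab hsab hts.le)
  have hφ' : ContDiffOn ℝ ((m + 2 : ℕ)) φ (Set.Ioo a b) := by exact_mod_cast hφ
  rw [ge_iff_le]
  refine _root_.le_of_forall_pos_le_add ?_
  intro ε hε
  have hΔε : 0 < Δ + ε := by linarith
  have hfacpos : ∀ k : ℕ, (0:ℝ) < Nat.factorial k := fun k => by positivity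
  set Vf : Fin (m + 2) → Fin (m + 2) → ℝ :=
    fun j i => myV m h t ε Δ φ (j : ℕ) (i : ℕ) with hVf
  set x₀ : Fin (m + 2) → ℝ := fun i => if (i : ℕ) + 1 < m + 2
      then t ^ ((i : ℕ) + 1) / (Nat.factorial ((i : ℕ) + 1)) else φ t with hx₀
  have hdiag : ∀ i : Fin (m + 2), Vf i i = if (i : ℕ) + 1 < m + 2
      then h ^ ((i : ℕ) + 1) / (Nat.factorial ((i : ℕ) + 1))
      else h ^ (m + 1) / (Nat.factorial (m + 1)) * (Δ + ε) := by
    intro i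
    exact myV_diag m h t ε Δ φ (i : ℕ)
  have hdiagpos : ∀ i : Fin (m + 2), 0 < Vf i i := by
    intro i
    rw [hdiag i]
    by_cases hi : (i : ℕ) + 1 < m + 2
    · rw [if_pos hi]; exact div_pos (pow_pos hh _) (hfacpos _)
    · rw [if_neg hi]; exact mul_pos (div_pos (pow_pos hh _) (hfacpos _)) hΔε
  have htri : ∀ j i : Fin (m + 2), (i : ℕ) < (j : ℕ) → Vf j i = 0 := by
    intro j i hij
    exact myV_tri m h t ε Δ φ (j : ℕ) (i : ℕ) hij j.isLt
  have hdet : (Matrix.of Vf).det = ∏ i, Vf i i :=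
    Matrix.det_of_upperTriangular (fun i j hlt => htri i j hlt)
  have hdetpos : 0 < ∏ i, Vf i i := Finset.prod_pos fun i _ => hdiagpos i
  have hlin : LinearIndependent ℝ Vf := by
    have : LinearIndependent ℝ (Matrix.of Vf).row := by
      rw [Matrix.linearIndependent_rows_iff_isUnit, Matrix.isUnit_iff_isUnit_det, hdet]
      exact (isUnit_iff_ne_zero).2 hdetpos.ne'
    exact this
  have hres := hrestr x₀ Vf hlin
  rw [my_volume] at hres
  rw [ENNReal.toReal_ofReal (abs_nonneg _), hdet, abs_of_pos hdetpos] at hres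
  -- lower bound on the curve measure
  set S := {τ ∈ Set.Ioo a b |
      (fun i : Fin (m + 2) => if (i : ℕ) + 1 < m + 2
          then τ ^ ((i : ℕ) + 1) / (Nat.factorial ((i : ℕ) + 1)) else φ τ)
        ∈ {x : Fin (m + 2) → ℝ | ∃ u : Fin (m + 2) → ℝ,
            (∀ j, u j ∈ Set.Icc (0 : ℝ) 1) ∧ x = x₀ + ∑ j, u j • Vf j}} with hS
  have hsubS : Set.Ioo t s ⊆ S := by
    intro τ hτ
    obtain ⟨u, hu1, hu2⟩ := my_contain m hφ' hmono hat hτ.1 hτ.2 hsb hε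
    refine ⟨⟨hat.trans hτ.1, hτ.2.trans hsb⟩, u, hu1, ?_⟩
    rw [hx₀, hVf]
    exact hu2
  have hSne : volume S ≠ ⊤ := by
    refine (lt_of_le_of_lt (measure_mono (Set.sep_subset _ _)) ?_).ne
    rw [Real.volume_Ioo]
    exact ENNReal.ofReal_lt_top
  have hlow : h ≤ (volume S).toReal := by
    refine (ENNReal.ofReal_le_iff_le_toReal hSne).1 ?_
    rw [← Real.volume_Ioo]
    exact measure_mono hsubS
  -- upper bound on the parallelepiped volume
  set K : ℕ := (∑ i : Fin (m + 1), ((i : ℕ) + 1)) + (m + 1) with hK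
  have hprodle : ∏ i, Vf i i ≤ h ^ K * (Δ + ε) := by
    have hle : ∀ i : Fin (m + 2), Vf i i ≤ (fun i : Fin (m + 2) =>
        if (i : ℕ) + 1 < m + 2 then h ^ ((i : ℕ) + 1) else h ^ (m + 1) * (Δ + ε)) i := by
      intro i
      rw [hdiag i]
      dsimp only
      by_cases hi : (i : ℕ) + 1 < m + 2
      · rw [if_pos hi, if_pos hi]
        exact div_le_self (pow_nonneg hh.le _) (Nat.one_le_cast.2 (Nat.factorial_pos _))
      · rw [if_neg hi, if_neg hi]
        exact mul_le_mul_of_nonneg_right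
          (div_le_self (pow_nonneg hh.le _) (Nat.one_le_cast.2 (Nat.factorial_pos _))) hΔε.le
    refine (Finset.prod_le_prod (fun i _ => (hdiagpos i).le) (fun i _ => hle i)).trans_eq ?_
    rw [Fin.prod_univ_castSucc]
    have h1 : ∀ i : Fin (m + 1), (if ((Fin.castSucc i : Fin (m + 2)) : ℕ) + 1 < m + 2
        then h ^ (((Fin.castSucc i : Fin (m + 2)) : ℕ) + 1) else h ^ (m + 1) * (Δ + ε))
        = h ^ ((i : ℕ) + 1) := by
      intro i
      rw [Fin.coe_castSucc, if_pos (by have := i.isLt; omega)]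
    have h2 : (if ((Fin.last (m + 1) : Fin (m + 2)) : ℕ) + 1 < m + 2
        then h ^ (((Fin.last (m + 1) : Fin (m + 2)) : ℕ) + 1) else h ^ (m + 1) * (Δ + ε))
        = h ^ (m + 1) * (Δ + ε) := by
      rw [Fin.val_last, if_neg (by omega)]
    rw [h2, Finset.prod_congr rfl (fun i _ => h1 i), Finset.prod_pow_eq_pow_sum]
    rw [hK, pow_add]
    ring
  have hKval : (K : ℝ) = ((m + 2 : ℕ) : ℝ) * (((m + 2 : ℕ) : ℝ) + 1) / 2 - 1 := by
    have hgauss : (∑ i ∈ range (m + 2), i) * 2 = (m + 2) * (m + 1) :=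
      Finset.sum_range_id_mul_two (m + 2)
    have hshift : ∑ j ∈ range (m + 2), j = ∑ i ∈ range (m + 1), (i + 1) := by
      rw [Finset.sum_range_succ' (fun j => j) (m + 1)]
      simp
    rw [hshift] at hgauss
    have hKR : (K : ℝ) = (∑ i ∈ range (m + 1), (i + 1) : ℕ) + (m + 1 : ℕ) := by
      rw [hK, Fin.sum_univ_eq_sum_range (fun j => j + 1) (m + 1)]
      push_cast
      ring
    have hgR : ((∑ i ∈ range (m + 1), (i + 1) : ℕ) : ℝ) * 2 = ((m + 2) * (m + 1) : ℕ) := by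
      exact_mod_cast congrArg (Nat.cast : ℕ → ℝ) hgauss
    push_cast at hKR hgR ⊢
    linarith
  have hmain : h ≤ B * (h ^ K * (Δ + ε)) ^ α := by
    refine hlow.trans (hres.trans ?_)
    exact mul_le_mul_of_nonneg_left
      (Real.rpow_le_rpow hdetpos.le hprodle hα0.le) hB.le
  set X := h ^ K * (Δ + ε) with hXdef
  have hXpos : 0 < X := mul_pos (pow_pos hh _) hΔε
  have h1 : h ^ ((1:ℝ)/α) ≤ (B * X ^ α) ^ ((1:ℝ)/α) :=
    Real.rpow_le_rpow hh.le hmain (by positivity)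
  have h2 : (B * X ^ α) ^ ((1:ℝ)/α) = B ^ ((1:ℝ)/α) * X := by
    rw [Real.mul_rpow hB.le (Real.rpow_nonneg hXpos.le _), ← Real.rpow_mul hXpos.le,
      mul_one_div_cancel hα0.ne', Real.rpow_one]
  have h3 : B ^ (-(1/α)) * h ^ ((1:ℝ)/α) ≤ X := by
    have hB1 : (0:ℝ) < B ^ (-(1/α)) := Real.rpow_pos_of_pos hB _
    calc B ^ (-(1/α)) * h ^ ((1:ℝ)/α) ≤ B ^ (-(1/α)) * (B ^ ((1:ℝ)/α) * X) :=
          mul_le_mul_of_nonneg_left (h1.trans h2.le) hB1.le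
      _ = X := by
          rw [← mul_assoc, ← Real.rpow_add hB]
          norm_num
  have h4 : h ^ ((1:ℝ)/α + 1 - ((m + 2 : ℕ) : ℝ) * (((m + 2 : ℕ) : ℝ) + 1) / 2)
      = h ^ ((1:ℝ)/α) / h ^ K := by
    rw [← Real.rpow_natCast h K, ← Real.rpow_sub hh]
    congr 1
    rw [hKval]
    ring
  have hKpow : (0:ℝ) < h ^ K := pow_pos hh _
  calc B ^ (-(1 / α)) * h ^ (1 / α + 1 - ((m + 2 : ℕ) : ℝ) * (((m + 2 : ℕ) : ℝ) + 1) / 2)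
      = B ^ (-(1 / α)) * h ^ ((1:ℝ)/α) / h ^ K := by rw [h4, mul_div_assoc]
    _ ≤ Δ + ε := by
        rw [div_le_iff₀ hKpow]
        calc B ^ (-(1 / α)) * h ^ ((1:ℝ)/α) ≤ X := h3
          _ = (Δ + ε) * h ^ K := by rw [hXdef]; ring
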